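/- For every integer n ≥ 2 there exists an injective group homomorphism from T_n into T_2 = T. -/

import Mathlib

noncomputable section

namespace ThompsonPaper

/-- The circle `ℝ/ℤ`. -/
abbrev Circle : Type := AddCircle (1 : ℝ)

/-- Homeomorphisms of a topological space form a group under composition,
with `(f * g) x = f (g x)`. -/
instance homeoGroup {α : Type*} [TopologicalSpace α] : Group (α ≃ₜ α) where
  mul f g := g.trans f
  one := Homeomorph.refl α
  inv := Homeomorph.symm
  mul_assoc _ _ _ := Homeomorph.ext fun _ => rfl
  one_mul _ := Homeomorph.ext fun _ => rfl
  mul_one _ := Homeomorph.ext fun _ => rfl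
  inv_mul_cancel f := Homeomorph.ext fun x => f.symm_apply_apply x

/-- `x` is an `n`-adic rational: `x = a / n ^ k` with `a` an integer, `k` a natural number. -/
def IsNAdic (n : ℕ) (x : ℝ) : Prop := ∃ a : ℤ, ∃ k : ℕ, x = (a : ℝ) / (n : ℝ) ^ k

/-- The set of `n`-adic points of the circle. -/
def nAdicPoints (n : ℕ) : Set Circle := { p | ∃ x : ℝ, IsNAdic n x ∧ p = (x : Circle) }

/-- `F : ℝ → ℝ` is a lift of the circle map `f`. -/
def IsLift (f : Circle ≃ₜ Circle) (F : ℝ → ℝ) : Prop :=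
  ∀ x : ℝ, f (x : Circle) = ((F x : ℝ) : Circle)

/-- `F : ℝ → ℝ` commutes with translation by `1` and is piecewise affine with finitely
many breakpoints (modulo `1`), all breakpoints at `n`-adic rationals, and with the slope
of every affine piece an integer power of `n`. -/
def PiecewiseNAffine (n : ℕ) (F : ℝ → ℝ) : Prop :=
  (∀ x : ℝ, F (x + 1) = F x + 1) ∧
  ∃ m : ℕ, ∃ t : ℕ → ℝ, ∃ slope : ℕ → ℤ, ∃ c : ℕ → ℝ,
    0 < m ∧ t 0 = 0 ∧ t m = 1 ∧
    (∀ i, i < m → t i < t (i + 1)) ∧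
    (∀ i, i ≤ m → IsNAdic n (t i)) ∧
    (∀ i, i < m → ∀ x ∈ Set.Icc (t i) (t (i + 1)),
      F x = (n : ℝ) ^ (slope i) * x + c i)

/-- Membership in Thompson's group `T_n`: an orientation-preserving homeomorphism of the
circle `ℝ/ℤ` mapping the set of `n`-adic points onto itself, which is piecewise affine
with finitely many breakpoints, all breakpoints at `n`-adic points, and all slopes integer
powers of `n`.  (Orientation preservation and the piecewise affine structure are expressed
through a strictly increasing lift.) -/
def InT (n : ℕ) (f : Circle ≃ₜ Circle) : Prop :=
  f '' nAdicPoints n = nAdicPoints n ∧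
  ∃ F : ℝ → ℝ, StrictMono F ∧ IsLift f F ∧ PiecewiseNAffine n F

/-- Thompson's group `T_n`, as a set of circle homeomorphisms. -/
def TnSet (n : ℕ) : Set (Circle ≃ₜ Circle) := { f | InT n f }

/-- Thompson's group `T_n`, as a subgroup of the homeomorphism group of the circle.
(The set `TnSet n` is closed under the group operations, so this subgroup has exactly
`TnSet n` as its underlying set.) -/
def Tn (n : ℕ) : Subgroup (Circle ≃ₜ Circle) := Subgroup.closure (TnSet n)



/-- start offset of the `d`-th block -/
def sO (d : ℕ) : ℝ := 1 - (2:ℝ)⁻¹ ^ d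
/-- code length of digit `d` -/
def cl (n d : ℕ) : ℕ := min (d+1) (n-1)
/-- width of the `d`-th block -/
def lam (n d : ℕ) : ℝ := (2:ℝ)⁻¹ ^ (cl n d)

lemma lam_pos (n d : ℕ) : 0 < lam n d := pow_pos (by norm_num) _
lemma lam_le_half (n d : ℕ) (hn : 2 ≤ n) : lam n d ≤ (2:ℝ)⁻¹ := by
  have h1 : 1 ≤ cl n d := by
    simp only [cl, le_min_iff]; omega
  calc lam n d ≤ (2:ℝ)⁻¹ ^ 1 := pow_le_pow_of_le_one (by norm_num) (by norm_num) h1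
    _ = (2:ℝ)⁻¹ := pow_one _
lemma sO_nonneg (d : ℕ) : 0 ≤ sO d := by
  have : (2:ℝ)⁻¹ ^ d ≤ 1 := pow_le_one₀ (by norm_num) (by norm_num)
  rw [sO]; linarith
lemma s_add_lam (n d : ℕ) (hd : d + 1 ≤ n - 1) : sO d + lam n d = sO (d+1) := by
  have : cl n d = d + 1 := by simp [cl]; omega
  simp [sO, lam, this, pow_succ]
  ring
lemma sO_add_lam_le_one (n d : ℕ) (hd : d ≤ n - 1) : sO d + lam n d ≤ 1 := by
  have h1 : lam n d ≤ (2:ℝ)⁻¹ ^ d := by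
    apply pow_le_pow_of_le_one (by norm_num) (by norm_num)
    simp [cl]; omega
  simp only [sO]; linarith

/-- the level-`k` approximations of the conversion map: `E n k a` is the image of `a / n^k`. -/
def EE (n : ℕ) : ℕ → ℕ → ℝ
  | 0, a => min (a : ℝ) 1
  | (k+1), a =>
      let d := min (a / n^k) (n-1)
      sO d + lam n d * EE n k (a - d * n^k)

lemma EE_zero (n k : ℕ) : EE n k 0 = 0 := by
  induction k with
  | zero => simp [EE]
  | succ k ih => simp [EE, ih, sO]

lemma EE_top (n k : ℕ) (hn : 2 ≤ n) : EE n k (n^k) = 1 := by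
  induction k with
  | zero => simp [EE]
  | succ k ih =>
      have hq : n^(k+1) / n^k = n := by
        rw [pow_succ, Nat.mul_div_cancel_left _ (Nat.pow_pos (by omega))]
      have hmin : min (n^(k+1) / n^k) (n-1) = n - 1 := by rw [hq]; omega
      have hr : n^(k+1) - (n-1) * n^k = n^k := by
        have h1 : (n-1) * n^k + n^k = (n-1+1) * n^k := by ring
        have h2 : (n-1+1) * n^k = n^(k+1) := by
          have : n - 1 + 1 = n := by omega
          rw [this, pow_succ]; ring
        omega
      have hcl : cl n (n-1) = n - 1 := by unfold cl; omega
      show sO _ + lam n _ * EE n k _ = 1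
      rw [hmin, hr, ih]
      simp [sO, lam, hcl]

lemma EE_ge_top (n k a : ℕ) (hn : 2 ≤ n) (ha : n^k ≤ a) : EE n k a = 1 := by
  induction k generalizing a with
  | zero =>
      simp only [pow_zero] at ha
      simp [EE, min_eq_right]
      exact_mod_cast Nat.one_le_cast.mpr ha
  | succ k ih =>
      have hpk : 0 < n^k := Nat.pow_pos (by omega)
      have hq : n ≤ a / n^k := by
        rw [Nat.le_div_iff_mul_le hpk]; calc n * n^k = n^(k+1) := (pow_succ n k).symm ▸ by ring
          _ ≤ a := ha
      have hmin : min (a / n^k) (n-1) = n - 1 := by omega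
      have hr : n^k ≤ a - (n-1) * n^k := by
        have h2 : (n-1+1) * n^k = n^(k+1) := by
          have h3 : n - 1 + 1 = n := by omega
          rw [h3, pow_succ]; ring
        have h4 : (n-1) * n^k + n^k = n^(k+1) := by rw [← h2]; ring
        omega
      show sO _ + lam n _ * EE n k _ = 1
      rw [hmin, ih _ hr]
      have hcl : cl n (n-1) = n - 1 := by unfold cl; omega
      simp [sO, lam, hcl]

lemma EE_split (n k d r : ℕ) (hn : 2 ≤ n) (hd : d ≤ n-1) (hr : r ≤ n^k) :
    EE n (k+1) (d * n^k + r) = sO d + lam n d * EE n k r := by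
  have hpk : 0 < n^k := Nat.pow_pos (by omega)
  rcases lt_or_eq_of_le hr with hlt | heq
  · have hq : (d * n^k + r) / n^k = d := by
      rw [mul_comm, Nat.mul_add_div hpk, Nat.div_eq_of_lt hlt, add_zero]
    have hmin : min ((d * n^k + r) / n^k) (n-1) = d := by rw [hq]; omega
    have hsub : d * n^k + r - d * n^k = r := by omega
    show sO _ + lam n _ * EE n k _ = _
    rw [hmin, hsub]
  · subst heq
    rcases lt_or_eq_of_le hd with hdlt | hdeq
    · -- d < n-1 : d*n^k + n^k = (d+1)*n^k
      have key : d * n^k + n^k = (d+1) * n^k + 0 := by ring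
      have hq : ((d+1) * n^k + 0) / n^k = d + 1 := by
        rw [mul_comm, Nat.mul_add_div hpk]; simp
      have hmin : min (((d+1) * n^k + 0) / n^k) (n-1) = d + 1 := by rw [hq]; omega
      have hsub : (d+1) * n^k + 0 - (d+1) * n^k = 0 := by omega
      rw [key]
      show sO _ + lam n _ * EE n k _ = _
      rw [hmin, hsub, EE_zero, EE_top n k hn, mul_zero, add_zero, mul_one]
      exact (s_add_lam n d (by omega)).symm
    · -- d = n-1 : total = n^(k+1)
      subst hdeq
      have key : (n-1) * n^k + n^k = n^(k+1) := by
        have h3 : n - 1 + 1 = n := by omega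
        calc (n-1) * n^k + n^k = (n-1+1) * n^k := by ring
          _ = n^(k+1) := by rw [h3, pow_succ]; ring
      rw [key, EE_top n (k+1) hn, EE_top n k hn, mul_one]
      have hcl : cl n (n-1) = n - 1 := by unfold cl; omega
      simp [sO, lam, hcl]

lemma EE_nonneg (n k a : ℕ) : 0 ≤ EE n k a := by
  induction k generalizing a with
  | zero => show (0:ℝ) ≤ min _ 1; positivity
  | succ k ih =>
      show 0 ≤ sO _ + lam n _ * EE n k _
      have := sO_nonneg (min (a / n^k) (n-1))
      have := (lam_pos n (min (a / n^k) (n-1))).le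
      have := ih (a - (min (a / n^k) (n-1)) * n^k)
      positivity

lemma EE_le_one (n k a : ℕ) (hn : 2 ≤ n) : EE n k a ≤ 1 := by
  induction k generalizing a with
  | zero => simp [EE]
  | succ k ih =>
      show sO _ + lam n _ * EE n k _ ≤ 1
      set d := min (a / n^k) (n-1) with hd
      have h1 : EE n k (a - d * n^k) ≤ 1 := ih _
      have h2 : lam n d * EE n k (a - d * n^k) ≤ lam n d * 1 :=
        mul_le_mul_of_nonneg_left h1 (lam_pos n d).le
      have h3 : sO d + lam n d ≤ 1 := sO_add_lam_le_one n d (by omega)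
      linarith

/-- decomposition of numbers below `n^(k+1)` -/
lemma EE_succ_formula (n k a : ℕ) (hn : 2 ≤ n) (ha : a < n^(k+1)) :
    a / n^k ≤ n - 1 ∧ a % n^k < n^k ∧ a = (a / n^k) * n^k + a % n^k ∧
    EE n (k+1) a = sO (a / n^k) + lam n (a / n^k) * EE n k (a % n^k) := by
  have hpk : 0 < n^k := Nat.pow_pos (by omega)
  have hq : a / n^k ≤ n - 1 := by
    have : a / n^k < n := by
      rw [Nat.div_lt_iff_lt_mul hpk]
      calc a < n^(k+1) := ha
        _ = n * n^k := by rw [pow_succ]; ring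
    omega
  have hm : a % n^k < n^k := Nat.mod_lt _ hpk
  have hdecomp : a = (a / n^k) * n^k + a % n^k := by
    rw [mul_comm]; exact (Nat.div_add_mod a (n^k)).symm
  refine ⟨hq, hm, hdecomp, ?_⟩
  conv_lhs => rw [hdecomp]
  exact EE_split n k _ _ hn hq hm.le

lemma EE_diff_pow (n k a : ℕ) (hn : 2 ≤ n) (ha : a < n^k) :
    ∃ m : ℕ, EE n k (a+1) - EE n k a = (2:ℝ)⁻¹ ^ m := by
  induction k generalizing a with
  | zero =>
      rw [pow_zero] at ha
      have : a = 0 := by omega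
      subst this
      exact ⟨0, by norm_num [EE]⟩
  | succ k ih =>
      obtain ⟨hq, hm, hdec, heq⟩ := EE_succ_formula n k a hn ha
      have ha1 : a + 1 = (a / n^k) * n^k + (a % n^k + 1) := by omega
      have heq1 : EE n (k+1) (a+1) = sO (a / n^k) + lam n (a / n^k) * EE n k (a % n^k + 1) := by
        rw [ha1]; exact EE_split n k _ _ hn hq (by omega)
      obtain ⟨m, hmm⟩ := ih (a % n^k) hm
      refine ⟨cl n (a / n^k) + m, ?_⟩
      rw [heq1, heq]
      have hr : sO (a / n^k) + lam n (a / n^k) * EE n k (a % n^k + 1) -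
          (sO (a / n^k) + lam n (a / n^k) * EE n k (a % n^k)) =
          lam n (a / n^k) * (EE n k (a % n^k + 1) - EE n k (a % n^k)) := by ring
      rw [hr, hmm, lam, pow_add]

lemma EE_succ_le (n k a : ℕ) (hn : 2 ≤ n) : EE n k (a+1) ≤ EE n k a + (2:ℝ)⁻¹ ^ k := by
  induction k generalizing a with
  | zero =>
      simp only [EE, pow_zero]
      have : ((a:ℝ)+1) ≥ 0 := by positivity
      rcases le_or_gt 1 (a:ℝ) with h | h
      · rw [min_eq_right h, min_eq_right (by push_cast; linarith)]; linarith
      · rw [min_eq_left h.le]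
        have : min ((a:ℝ)+1) 1 ≤ 1 := min_le_right _ _
        push_cast
        linarith
  | succ k ih =>
      rcases lt_or_ge a (n^(k+1)) with ha | ha
      · obtain ⟨hq, hm, hdec, heq⟩ := EE_succ_formula n k a hn ha
        have ha1 : a + 1 = (a / n^k) * n^k + (a % n^k + 1) := by omega
        have heq1 : EE n (k+1) (a+1) = sO (a / n^k) + lam n (a / n^k) * EE n k (a % n^k + 1) := by
          rw [ha1]; exact EE_split n k _ _ hn hq (by omega)
        have h2 : lam n (a / n^k) ≤ (2:ℝ)⁻¹ := lam_le_half n _ hn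
        have h3 := ih (a % n^k)
        have h4 : EE n k (a % n^k + 1) - EE n k (a % n^k) ≤ (2:ℝ)⁻¹ ^ k := by linarith
        have h5 : lam n (a / n^k) * (EE n k (a % n^k + 1) - EE n k (a % n^k)) ≤ (2:ℝ)⁻¹ * (2:ℝ)⁻¹^k := by
          rcases le_or_gt (EE n k (a % n^k + 1) - EE n k (a % n^k)) 0 with hneg | hpos
          · calc lam n (a / n^k) * (EE n k (a % n^k + 1) - EE n k (a % n^k)) ≤ 0 :=
                  mul_nonpos_of_nonneg_of_nonpos (lam_pos n (a / n^k)).le hneg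
              _ ≤ (2:ℝ)⁻¹ * (2:ℝ)⁻¹^k := by positivity
          · exact mul_le_mul h2 h4 hpos.le (by norm_num)
        have h6 : (2:ℝ)⁻¹ * (2:ℝ)⁻¹^k = (2:ℝ)⁻¹^(k+1) := by rw [pow_succ]; ring
        have hdist : lam n (a / n^k) * (EE n k (a % n^k + 1) - EE n k (a % n^k))
            = lam n (a / n^k) * EE n k (a % n^k + 1) - lam n (a / n^k) * EE n k (a % n^k) := by ring
        rw [heq1, heq]
        linarith
      · rw [EE_ge_top n (k+1) a hn ha, EE_ge_top n (k+1) (a+1) hn (le_trans ha (by omega))]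
        have : (0:ℝ) < (2:ℝ)⁻¹ ^ (k+1) := by positivity
        linarith

lemma EE_lt_succ (n k a : ℕ) (hn : 2 ≤ n) (ha : a < n^k) : EE n k a < EE n k (a+1) := by
  obtain ⟨m, hm⟩ := EE_diff_pow n k a hn ha
  have : (0:ℝ) < (2:ℝ)⁻¹ ^ m := by positivity
  linarith

lemma EE_mono (n k : ℕ) (hn : 2 ≤ n) : Monotone (EE n k) := by
  apply monotone_nat_of_le_succ
  intro a
  rcases lt_or_ge a (n^k) with h | h
  · exact (EE_lt_succ n k a hn h).le
  · rw [EE_ge_top n k a hn h, EE_ge_top n k (a+1) hn (by omega)]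

lemma EE_strict (n k a b : ℕ) (hn : 2 ≤ n) (hab : a < b) (hb : b ≤ n^k) :
    EE n k a < EE n k b := by
  have h1 : EE n k a < EE n k (a+1) := EE_lt_succ n k a hn (by omega)
  have h2 : EE n k (a+1) ≤ EE n k b := EE_mono n k hn (by omega)
  linarith

/-- the key self-similarity identity on levels -/
lemma EE_append (n : ℕ) (hn : 2 ≤ n) :
    ∀ k j a b : ℕ, a < n^k → b ≤ n^j →
    EE n (k+j) (a * n^j + b) = EE n k a + (EE n k (a+1) - EE n k a) * EE n j b := by
  intro k
  induction k with
  | zero =>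
      intro j a b ha hb
      rw [pow_zero] at ha
      have : a = 0 := by omega
      subst this
      simp [EE_zero]
      norm_num [EE]
  | succ k ih =>
      intro j a b ha hb
      have hpk : 0 < n^k := Nat.pow_pos (by omega)
      have hpj : 0 < n^j := Nat.pow_pos (by omega)
      obtain ⟨hq, hm, hdec, heq⟩ := EE_succ_formula n k a hn ha
      set d := a / n^k with hdd
      set r := a % n^k with hrr
      -- a * n^j + b = d * n^(k+j) + (r * n^j + b)
      have hsplit2 : a * n^j + b = d * n^(k+j) + (r * n^j + b) := by
        conv_lhs => rw [hdec]
        rw [pow_add]; ring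
      have hrb : r * n^j + b ≤ n^(k+j) := by
        have h1 : r * n^j + b ≤ (n^k - 1) * n^j + n^j := by
          have : r ≤ n^k - 1 := by omega
          exact Nat.add_le_add (Nat.mul_le_mul_right _ this) hb
        have h2 : (n^k - 1) * n^j + n^j = n^(k+j) := by
          rw [pow_add]
          have h3 : (n^k - 1) + 1 = n^k := by omega
          calc (n^k - 1) * n^j + n^j = ((n^k - 1) + 1) * n^j := by ring
            _ = n^k * n^j := by rw [h3]
        omega
      have hkj : k + 1 + j = (k + j) + 1 := by omega
      rw [hkj, hsplit2, EE_split n (k+j) d _ hn hq hrb]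
      rw [ih j r b hm hb]
      -- also expand EE n (k+1) a and EE n (k+1) (a+1)
      have ha1 : a + 1 = d * n^k + (r+1) := by omega
      have heq1 : EE n (k+1) (a+1) = sO d + lam n d * EE n k (r+1) := by
        rw [ha1]; exact EE_split n k _ _ hn hq (by omega)
      rw [heq, heq1]
      ring

lemma EE_level (n k j a : ℕ) (hn : 2 ≤ n) (ha : a ≤ n^k) :
    EE n (k+j) (a * n^j) = EE n k a := by
  rcases lt_or_eq_of_le ha with h | h
  · have := EE_append n hn k j a 0 h (by positivity)
    simpa [EE_zero] using this
  · subst h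
    rw [← pow_add, EE_top n (k+j) hn, EE_top n k hn]

lemma EE_cross (n k j a b : ℕ) (hn : 2 ≤ n) (ha : a ≤ n^k) (hb : b ≤ n^j)
    (hle : (a:ℝ) / (n:ℝ)^k ≤ (b:ℝ) / (n:ℝ)^j) : EE n k a ≤ EE n j b := by
  have hn0 : (0:ℝ) < (n:ℝ) := by
    have : 0 < n := by omega
    exact_mod_cast this
  have hk0 : (0:ℝ) < (n:ℝ)^k := by positivity
  have hj0 : (0:ℝ) < (n:ℝ)^j := by positivity
  have hreal : (a:ℝ) * (n:ℝ)^j ≤ (b:ℝ) * (n:ℝ)^k := by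
    rw [div_le_div_iff₀ hk0 hj0] at hle
    exact hle
  have hnat : a * n^j ≤ b * n^k := by exact_mod_cast hreal
  calc EE n k a = EE n (k+j) (a * n^j) := (EE_level n k j a hn ha).symm
    _ ≤ EE n (k+j) (b * n^k) := EE_mono n (k+j) hn hnat
    _ = EE n (j+k) (b * n^k) := by rw [add_comm k j]
    _ = EE n j b := EE_level n j k b hn hb

lemma EE_dyadic (n k a : ℕ) : ∃ b m : ℕ, EE n k a = (b:ℝ) / 2^m := by
  induction k generalizing a with
  | zero =>
      rcases le_or_gt 1 a with h | h
      · exact ⟨1, 0, by simp [EE, min_eq_right]; exact_mod_cast Nat.one_le_cast.mpr h⟩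
      · have : a = 0 := by omega
        subst this; exact ⟨0, 0, by simp [EE]⟩
  | succ k ih =>
      obtain ⟨b, m, hbm⟩ := ih (a - (min (a / n^k) (n-1)) * n^k)
      set d := min (a / n^k) (n-1) with hd
      refine ⟨(2^d - 1) * 2^(cl n d + m) + b * 2^d, d + cl n d + m, ?_⟩
      show sO d + lam n d * EE n k _ = _
      rw [hbm, sO, lam]
      have h2d : (0:ℝ) < 2^d := by positivity
      have hcast : ((2^d - 1 : ℕ) : ℝ) = 2^d - 1 := by
        have : (1:ℕ) ≤ 2^d := Nat.one_le_two_pow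
        push_cast [this]; ring
      push_cast [hcast]
      simp only [inv_pow]
      field_simp
      ring

/-- the set of approximation values below `x` -/
def nadicBelow (n : ℕ) (x : ℝ) : Set ℝ :=
  {y | ∃ k a : ℕ, a ≤ n^k ∧ (a:ℝ)/(n:ℝ)^k ≤ x ∧ y = EE n k a}

def phi (n : ℕ) (x : ℝ) : ℝ := sSup (nadicBelow n x)

lemma nadicBelow_nonempty (n : ℕ) (x : ℝ) (hx : 0 ≤ x) : (nadicBelow n x).Nonempty :=
  ⟨EE n 0 0, 0, 0, by simp, by simpa using hx, rfl⟩

lemma nadicBelow_bdd (n : ℕ) (x : ℝ) (hn : 2 ≤ n) : BddAbove (nadicBelow n x) := by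
  refine ⟨1, fun y hy => ?_⟩
  obtain ⟨k, a, _, _, rfl⟩ := hy
  exact EE_le_one n k a hn

lemma le_phi (n k a : ℕ) (x : ℝ) (hn : 2 ≤ n) (ha : a ≤ n^k) (hax : (a:ℝ)/(n:ℝ)^k ≤ x) :
    EE n k a ≤ phi n x :=
  le_csSup (nadicBelow_bdd n x hn) ⟨k, a, ha, hax, rfl⟩

lemma phi_le (n j b : ℕ) (x : ℝ) (hn : 2 ≤ n) (hx : 0 ≤ x) (hb : b ≤ n^j)
    (hxb : x ≤ (b:ℝ)/(n:ℝ)^j) : phi n x ≤ EE n j b := by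
  apply csSup_le (nadicBelow_nonempty n x hx)
  rintro y ⟨k, a, ha, hax, rfl⟩
  exact EE_cross n k j a b hn ha hb (hax.trans hxb)

lemma phi_coe (n k a : ℕ) (hn : 2 ≤ n) (ha : a ≤ n^k) :
    phi n ((a:ℝ)/(n:ℝ)^k) = EE n k a := by
  have h0 : (0:ℝ) ≤ (a:ℝ)/(n:ℝ)^k := by positivity
  exact le_antisymm (phi_le n k a _ hn h0 ha le_rfl) (le_phi n k a _ hn ha le_rfl)

lemma phi_zero (n : ℕ) (hn : 2 ≤ n) : phi n 0 = 0 := by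
  have := phi_coe n 0 0 hn (by simp)
  simpa [EE_zero] using this

lemma phi_one (n : ℕ) (hn : 2 ≤ n) : phi n 1 = 1 := by
  have := phi_coe n 0 1 hn (by simp)
  simp only [pow_zero, Nat.cast_one, div_one] at this
  rw [this]
  exact EE_top n 0 hn

lemma phi_mono (n : ℕ) (x y : ℝ) (hn : 2 ≤ n) (hx : 0 ≤ x) (hxy : x ≤ y) :
    phi n x ≤ phi n y := by
  apply csSup_le_csSup (nadicBelow_bdd n y hn) (nadicBelow_nonempty n x hx)
  rintro z ⟨k, a, ha, hax, rfl⟩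
  exact ⟨k, a, ha, hax.trans hxy, rfl⟩

lemma phi_nonneg (n : ℕ) (x : ℝ) (hn : 2 ≤ n) (hx : 0 ≤ x) : 0 ≤ phi n x := by
  have := le_phi n 0 0 x hn (by simp) (by simpa using hx)
  simpa [EE_zero] using this

lemma phi_le_one (n : ℕ) (x : ℝ) (hn : 2 ≤ n) (hx : 0 ≤ x) : phi n x ≤ 1 := by
  apply csSup_le (nadicBelow_nonempty n x hx)
  rintro y ⟨k, a, _, _, rfl⟩
  exact EE_le_one n k a hn

/-- self-similarity of `phi` -/
lemma phi_selfsim (n k a : ℕ) (t : ℝ) (hn : 2 ≤ n) (ha : a < n^k)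
    (ht0 : 0 ≤ t) (ht1 : t ≤ 1) :
    phi n (((a:ℝ) + t)/(n:ℝ)^k) =
      EE n k a + (EE n k (a+1) - EE n k a) * phi n t := by
  have hn0 : (0:ℝ) < (n:ℝ) := by exact_mod_cast (by omega : 0 < n)
  have hk0 : (0:ℝ) < (n:ℝ)^k := by positivity
  have hW : 0 < EE n k (a+1) - EE n k a := by
    have := EE_lt_succ n k a hn ha; linarith
  set W := EE n k (a+1) - EE n k a with hWdef
  have hx0 : (0:ℝ) ≤ ((a:ℝ) + t)/(n:ℝ)^k := by positivity
  apply le_antisymm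
  · apply csSup_le (nadicBelow_nonempty n _ hx0)
    rintro y ⟨j, b, hb, hbx, rfl⟩
    have hphit : 0 ≤ phi n t := phi_nonneg n t hn ht0
    rcases le_or_gt (b * n^k) (a * n^j) with hcase | hcase
    · have hble : (b:ℝ)/(n:ℝ)^j ≤ (a:ℝ)/(n:ℝ)^k := by
        rw [div_le_div_iff₀ (by positivity) (by positivity)]
        exact_mod_cast hcase
      have h1 : EE n j b ≤ EE n k a := EE_cross n j k b a hn hb ha.le hble
      nlinarith
    · set u := b * n^k - a * n^j with hu
      have hu1 : b * n^k = a * n^j + u := by omega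
      have hj0 : (0:ℝ) < (n:ℝ)^j := by positivity
      -- from hbx : b/n^j ≤ (a+t)/n^k  get  b n^k ≤ (a+t) n^j
      have hbx' : (b:ℝ) * (n:ℝ)^k ≤ ((a:ℝ) + t) * (n:ℝ)^j := by
        rw [div_le_div_iff₀ hj0 hk0] at hbx
        exact hbx
      have hu3 : (u:ℝ)/(n:ℝ)^j ≤ t := by
        rw [div_le_iff₀ hj0]
        have hcast : (u:ℝ) = (b:ℝ) * (n:ℝ)^k - (a:ℝ) * (n:ℝ)^j := by
          have h9 : ((b * n^k : ℕ) : ℝ) = ((a * n^j + u : ℕ) : ℝ) := by rw [hu1]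
          push_cast at h9
          linarith
        rw [hcast]
        nlinarith
      have hu2 : u ≤ n^j := by
        have htt : (u:ℝ)/(n:ℝ)^j ≤ 1 := hu3.trans ht1
        rw [div_le_one hj0] at htt
        exact_mod_cast htt
      have hlev : EE n j b = EE n (j+k) (b * n^k) := (EE_level n j k b hn hb).symm
      have happ : EE n (k+j) (a * n^j + u) = EE n k a + W * EE n j u :=
        EE_append n hn k j a u ha hu2
      have hEEu : EE n j u ≤ phi n t := le_phi n j u t hn hu2 hu3
      rw [hlev, add_comm j k, hu1, happ]
      nlinarith
  · -- show EE n k a + W * phi n t ≤ phi n x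
    have key : phi n t ≤ (phi n (((a:ℝ) + t)/(n:ℝ)^k) - EE n k a) / W := by
      apply csSup_le (nadicBelow_nonempty n t ht0)
      rintro y ⟨j, b, hb, hbt, rfl⟩
      rw [le_div_iff₀ hW]
      have hmem : EE n k a + W * EE n j b ≤ phi n (((a:ℝ) + t)/(n:ℝ)^k) := by
        have happ : EE n (k+j) (a * n^j + b) = EE n k a + W * EE n j b :=
          EE_append n hn k j a b ha hb
        rw [← happ]
        apply le_phi n (k+j) _ _ hn
        · calc a * n^j + b ≤ (n^k - 1) * n^j + n^j := by
                have h1 : a ≤ n^k - 1 := by omega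
                exact Nat.add_le_add (Nat.mul_le_mul_right _ h1) hb
            _ = n^(k+j) := by
                have h3 : (n^k - 1) + 1 = n^k := by
                  have : 0 < n^k := Nat.pow_pos (by omega)
                  omega
                calc (n^k - 1) * n^j + n^j = ((n^k - 1) + 1) * n^j := by ring
                  _ = n^k * n^j := by rw [h3]
                  _ = n^(k+j) := by rw [pow_add]
        · rw [pow_add, div_le_div_iff₀ (by positivity) (by positivity)]
          push_cast
          have hbt' : (b:ℝ) ≤ t * (n:ℝ)^j := by
            rw [div_le_iff₀ (by positivity)] at hbt
            exact hbt
          nlinarith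
      linarith
    rw [le_div_iff₀ hW] at key
    linarith

lemma exists_pow_gt (n : ℕ) (hn : 2 ≤ n) (C : ℝ) : ∃ k : ℕ, C < (n:ℝ)^k := by
  obtain ⟨k, hk⟩ := pow_unbounded_of_one_lt C (by exact_mod_cast hn : (1:ℝ) < (n:ℝ))
  exact ⟨k, hk⟩

lemma phi_strictOn (n : ℕ) (x y : ℝ) (hn : 2 ≤ n) (hx : 0 ≤ x) (hy : y ≤ 1)
    (hxy : x < y) : phi n x < phi n y := by
  have hn0 : (0:ℝ) < (n:ℝ) := by exact_mod_cast (by omega : 0 < n)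
  obtain ⟨k, hk⟩ := exists_pow_gt n hn (2 / (y - x))
  have hk0 : (0:ℝ) < (n:ℝ)^k := by positivity
  have h2 : (2:ℝ) < (y - x) * (n:ℝ)^k := by
    rw [div_lt_iff₀ (sub_pos.mpr hxy)] at hk
    linarith
  set a : ℤ := ⌈x * (n:ℝ)^k⌉ with hadef
  have ha1 : x * (n:ℝ)^k ≤ (a:ℝ) := Int.le_ceil _
  have ha2 : (a:ℝ) < x * (n:ℝ)^k + 1 := Int.ceil_lt_add_one _
  have ha0 : 0 ≤ a := Int.ceil_nonneg (by positivity)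
  set b : ℕ := a.toNat with hbdef
  have hab : (b:ℝ) = (a:ℝ) := by
    have h9 : ((b:ℤ):ℝ) = ((a:ℤ):ℝ) := by rw [Int.toNat_of_nonneg ha0]
    exact_mod_cast h9
  have hxb : x ≤ (b:ℝ)/(n:ℝ)^k := by
    rw [le_div_iff₀ hk0, hab]; exact ha1
  have hb1y : ((b:ℝ)+1)/(n:ℝ)^k < y := by
    rw [div_lt_iff₀ hk0, hab]
    have hexp : (y - x) * (n:ℝ)^k = y * (n:ℝ)^k - x * (n:ℝ)^k := by ring
    linarith
  have hb1 : b + 1 ≤ n^k := by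
    have h5 : ((b:ℝ)+1) < y * (n:ℝ)^k := by
      rw [div_lt_iff₀ hk0] at hb1y; exact hb1y
    have h6 : ((b:ℝ)+1) < (n:ℝ)^k := by nlinarith
    have h7 : ((b+1 : ℕ):ℝ) < ((n^k : ℕ):ℝ) := by push_cast; push_cast at h6; linarith
    exact_mod_cast h7.le
  have hstep1 : phi n x ≤ EE n k b := phi_le n k b x hn hx (by omega) hxb
  have hstep2 : EE n k b < EE n k (b+1) := EE_lt_succ n k b hn (by omega)
  have hstep3 : EE n k (b+1) ≤ phi n y := by
    apply le_phi n k (b+1) y hn hb1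
    push_cast
    exact hb1y.le
  linarith

lemma phi_cont_est (n k : ℕ) (x y : ℝ) (hn : 2 ≤ n) (hx : 0 ≤ x) (hy1 : y ≤ 1)
    (hxy : x ≤ y) (hclose : y - x ≤ ((n:ℝ)^k)⁻¹) :
    phi n y - phi n x ≤ 2 * (2:ℝ)⁻¹^k := by
  have hn0 : (0:ℝ) < (n:ℝ) := by exact_mod_cast (by omega : 0 < n)
  have hk0 : (0:ℝ) < (n:ℝ)^k := by positivity
  have hx1 : x ≤ 1 := hxy.trans hy1
  set A : ℤ := ⌊x * (n:ℝ)^k⌋ with hAdef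
  have hfl0 : 0 ≤ A := Int.floor_nonneg.mpr (by positivity)
  set a : ℕ := A.toNat with hadef
  have haA : ((a:ℕ):ℝ) = ((A:ℤ):ℝ) := by
    have h9 : ((a:ℤ):ℝ) = ((A:ℤ):ℝ) := by rw [hadef, Int.toNat_of_nonneg hfl0]
    exact_mod_cast h9
  have ha1 : (a:ℝ) ≤ x * (n:ℝ)^k := by
    rw [haA]; exact Int.floor_le _
  have ha2 : x * (n:ℝ)^k < (a:ℝ) + 1 := by
    rw [haA]; exact Int.lt_floor_add_one _
  have hak : a ≤ n^k := by
    have : (a:ℝ) ≤ (n:ℝ)^k := by nlinarith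
    have h7 : (a:ℝ) ≤ ((n^k : ℕ):ℝ) := by push_cast; linarith
    exact_mod_cast h7
  have hlow : EE n k a ≤ phi n x := by
    apply le_phi n k a x hn hak
    rw [div_le_iff₀ hk0]; exact ha1
  set b : ℕ := min (a+2) (n^k) with hbdef
  have hupp : phi n y ≤ EE n k b := by
    apply phi_le n k b y hn (hx.trans hxy) (by omega)
    have hy2 : y ≤ ((a:ℝ)+2)/(n:ℝ)^k := by
      rw [le_div_iff₀ hk0]
      have : x * (n:ℝ)^k ≥ (a:ℝ) := by linarith [ha1]
      have h8 : y * (n:ℝ)^k ≤ x * (n:ℝ)^k + 1 := by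
        have h9 : y ≤ x + ((n:ℝ)^k)⁻¹ := by linarith
        have := mul_le_mul_of_nonneg_right h9 hk0.le
        rw [add_mul, inv_mul_cancel₀ hk0.ne'] at this
        linarith
      linarith
    have hyn : y ≤ ((n^k : ℕ):ℝ)/(n:ℝ)^k := by
      push_cast
      rw [div_self hk0.ne']
      exact hy1
    rcases min_cases (a+2) (n^k) with ⟨hmin, _⟩ | ⟨hmin, _⟩
    · rw [hbdef, hmin]; push_cast; exact hy2
    · rw [hbdef, hmin]; exact hyn
  have hb2 : EE n k b ≤ EE n k (a+2) := EE_mono n k hn (by omega)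
  have hs1 := EE_succ_le n k a hn
  have hs2 := EE_succ_le n k (a+1) hn
  have : EE n k (a+2) ≤ EE n k a + 2 * (2:ℝ)⁻¹^k := by
    have : a + 2 = (a+1) + 1 := by omega
    rw [this]; linarith
  linarith

lemma phi_continuousOn (n : ℕ) (hn : 2 ≤ n) : ContinuousOn (phi n) (Set.Icc 0 1) := by
  intro x hx
  rw [Metric.continuousWithinAt_iff]
  intro ε hε
  obtain ⟨k, hk⟩ := exists_pow_gt 2 (le_refl 2) (2 / ε)
  have h2k : 2 * (2:ℝ)⁻¹^k < ε := by
    have h2k0 : (0:ℝ) < (2:ℝ)^k := by positivity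
    rw [div_lt_iff₀ hε] at hk
    have hinv : (2:ℝ)⁻¹^k = ((2:ℝ)^k)⁻¹ := by rw [inv_pow]
    rw [hinv]
    rw [mul_comm] at hk
    calc 2 * ((2:ℝ)^k)⁻¹ < (ε * (2:ℝ)^k) * ((2:ℝ)^k)⁻¹ := by
          apply mul_lt_mul_of_pos_right hk (by positivity)
      _ = ε := by field_simp
    
  refine ⟨((n:ℝ)^k)⁻¹, by positivity, fun y hy hdist => ?_⟩
  have hclose : |y - x| ≤ ((n:ℝ)^k)⁻¹ := by
    rw [Real.dist_eq] at hdist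
    exact hdist.le
  have key : |phi n y - phi n x| ≤ 2 * (2:ℝ)⁻¹^k := by
    rcases le_total x y with h | h
    · have := phi_cont_est n k x y hn hx.1 hy.2 h (by rw [abs_of_nonneg (by linarith)] at hclose; linarith)
      have hmono := phi_mono n x y hn hx.1 h
      rw [abs_of_nonneg (by linarith)]
      linarith
    · have := phi_cont_est n k y x hn hy.1 hx.2 h (by rw [abs_of_nonpos (by linarith)] at hclose; linarith)
      have hmono := phi_mono n y x hn hy.1 h
      rw [abs_of_nonpos (by linarith)]
      linarith
  rw [Real.dist_eq]
  calc |phi n y - phi n x| ≤ 2 * (2:ℝ)⁻¹^k := key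
    _ < ε := h2k

lemma phi_surjOn (n : ℕ) (hn : 2 ≤ n) :
    Set.Icc (0:ℝ) 1 ⊆ phi n '' (Set.Icc 0 1) := by
  have h01 : (0:ℝ) ≤ 1 := by norm_num
  have := intermediate_value_Icc h01 (phi_continuousOn n hn)
  rw [phi_zero n hn, phi_one n hn] at this
  exact this

/-- the conversion map on all of `ℝ` -/
def Phi (n : ℕ) (x : ℝ) : ℝ := ⌊x⌋ + phi n (Int.fract x)

lemma Phi_eq_phi (n : ℕ) (x : ℝ) (hn : 2 ≤ n) (h0 : 0 ≤ x) (h1 : x ≤ 1) :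
    Phi n x = phi n x := by
  rcases lt_or_eq_of_le h1 with h | h
  · have hfl : ⌊x⌋ = 0 := Int.floor_eq_zero_iff.mpr ⟨h0, h⟩
    rw [Phi, hfl, Int.fract, hfl]
    simp
  · subst h
    rw [Phi]
    norm_num [Int.fract_one, phi_zero n hn, phi_one n hn]

lemma Phi_add_int (n : ℕ) (x : ℝ) (m : ℤ) : Phi n (x + m) = Phi n x + m := by
  rw [Phi, Phi, Int.fract_add_intCast, Int.floor_add_intCast]
  push_cast
  ring

lemma Phi_strictMono (n : ℕ) (hn : 2 ≤ n) : StrictMono (Phi n) := by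
  intro x y hxy
  have hfx0 : 0 ≤ Int.fract x := Int.fract_nonneg x
  have hfx1 : Int.fract x < 1 := Int.fract_lt_one x
  have hfy0 : 0 ≤ Int.fract y := Int.fract_nonneg y
  have hfy1 : Int.fract y < 1 := Int.fract_lt_one y
  rcases eq_or_lt_of_le (Int.floor_le_floor hxy.le) with hfl | hfl
  · have hfr : Int.fract x < Int.fract y := by
      rw [Int.fract, Int.fract, ← hfl]
      linarith
    have := phi_strictOn n (Int.fract x) (Int.fract y) hn hfx0 hfy1.le hfr
    rw [Phi, Phi, ← hfl]
    linarith
  · have h1 : phi n (Int.fract x) < 1 := by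
      have := phi_strictOn n (Int.fract x) 1 hn hfx0 le_rfl hfx1
      rwa [phi_one n hn] at this
    have h2 : 0 ≤ phi n (Int.fract y) := phi_nonneg n _ hn hfy0
    rw [Phi, Phi]
    have : (⌊x⌋:ℝ) + 1 ≤ (⌊y⌋:ℝ) := by exact_mod_cast hfl
    linarith

lemma Phi_surjective (n : ℕ) (hn : 2 ≤ n) : Function.Surjective (Phi n) := by
  intro y
  have hfr : Int.fract y ∈ Set.Icc (0:ℝ) 1 := ⟨Int.fract_nonneg y, (Int.fract_lt_one y).le⟩
  obtain ⟨x0, hx0, hphix0⟩ := phi_surjOn n hn hfr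
  have hx0lt : x0 < 1 := by
    rcases lt_or_eq_of_le hx0.2 with h | h
    · exact h
    · exfalso
      rw [h, phi_one n hn] at hphix0
      have := Int.fract_lt_one y
      linarith
  refine ⟨(⌊y⌋:ℝ) + x0, ?_⟩
  rw [Phi]
  have hfl : ⌊(⌊y⌋:ℝ) + x0⌋ = ⌊y⌋ := by
    rw [add_comm, Int.floor_add_intCast]
    rw [Int.floor_eq_zero_iff.mpr ⟨hx0.1, hx0lt⟩]
    ring
  have hfrac : Int.fract ((⌊y⌋:ℝ) + x0) = x0 := by
    rw [add_comm, Int.fract_add_intCast]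
    exact Int.fract_eq_self.mpr ⟨hx0.1, hx0lt⟩
  rw [hfl, hfrac, hphix0]
  exact Int.floor_add_fract y

/-- the conversion map as an order isomorphism of `ℝ` -/
def PhiIso (n : ℕ) (hn : 2 ≤ n) : ℝ ≃o ℝ :=
  StrictMono.orderIsoOfSurjective (Phi n) (Phi_strictMono n hn) (Phi_surjective n hn)

lemma PhiIso_apply (n : ℕ) (hn : 2 ≤ n) (x : ℝ) : PhiIso n hn x = Phi n x := rfl

lemma Psi_add_int (n : ℕ) (hn : 2 ≤ n) (y : ℝ) (m : ℤ) :
    (PhiIso n hn).symm (y + m) = (PhiIso n hn).symm y + m := by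
  apply (Phi_strictMono n hn).injective
  have h1 : Phi n ((PhiIso n hn).symm (y + m)) = y + m := by
    have := (PhiIso n hn).apply_symm_apply (y + m)
    rwa [PhiIso_apply] at this
  have h2 : Phi n ((PhiIso n hn).symm y) = y := by
    have := (PhiIso n hn).apply_symm_apply y
    rwa [PhiIso_apply] at this
  rw [h1, Phi_add_int, h2]

lemma Phi_Psi (n : ℕ) (hn : 2 ≤ n) (y : ℝ) : Phi n ((PhiIso n hn).symm y) = y := by
  have := (PhiIso n hn).apply_symm_apply y
  rwa [PhiIso_apply] at this

lemma Psi_Phi (n : ℕ) (hn : 2 ≤ n) (x : ℝ) : (PhiIso n hn).symm (Phi n x) = x := by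
  have := (PhiIso n hn).symm_apply_apply x
  rwa [PhiIso_apply] at this

/-- self-similarity of `Phi` over every `n`-adic standard interval -/
lemma Phi_selfsim (n : ℕ) (hn : 2 ≤ n) (a : ℤ) (k : ℕ) :
    (∃ mm : ℕ, Phi n (((a:ℝ)+1)/(n:ℝ)^k) - Phi n ((a:ℝ)/(n:ℝ)^k) = (2:ℝ)⁻¹^mm) ∧
    ∀ t : ℝ, 0 ≤ t → t ≤ 1 →
      Phi n (((a:ℝ)+t)/(n:ℝ)^k) =
        Phi n ((a:ℝ)/(n:ℝ)^k) +
          (Phi n (((a:ℝ)+1)/(n:ℝ)^k) - Phi n ((a:ℝ)/(n:ℝ)^k)) * phi n t := by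
  have hn0 : (0:ℝ) < (n:ℝ) := by exact_mod_cast (by omega : 0 < n)
  have hk0 : (0:ℝ) < (n:ℝ)^k := by positivity
  have hnkZ : (0:ℤ) < (n:ℤ)^k := by
    have : (0:ℕ) < n^k := Nat.pow_pos (by omega)
    exact_mod_cast this
  set M : ℤ := a / ((n:ℤ)^k) with hM
  set r : ℤ := a % ((n:ℤ)^k) with hr
  have hr0 : 0 ≤ r := Int.emod_nonneg a hnkZ.ne'
  have hrlt : r < (n:ℤ)^k := Int.emod_lt_of_pos a hnkZ
  have hdec : a = (n:ℤ)^k * M + r := by rw [hM, hr]; exact (Int.mul_ediv_add_emod a _).symm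
  set rn : ℕ := r.toNat with hrn
  have hrncast : ((rn:ℕ):ℝ) = (r:ℝ) := by
    have h9 : ((rn:ℤ):ℝ) = (r:ℝ) := by rw [hrn, Int.toNat_of_nonneg hr0]
    exact_mod_cast h9
  have hrnlt : rn < n^k := by
    have : (rn:ℤ) < (n:ℤ)^k := by rw [hrn, Int.toNat_of_nonneg hr0]; exact hrlt
    exact_mod_cast this
  have hacast : (a:ℝ) = (n:ℝ)^k * (M:ℝ) + (rn:ℝ) := by
    rw [hrncast]
    exact_mod_cast congrArg (Int.cast : ℤ → ℝ) hdec
  -- key decomposition of points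
  have hpt : ∀ s : ℝ, ((a:ℝ)+s)/(n:ℝ)^k = ((rn:ℝ)+s)/(n:ℝ)^k + (M:ℝ) := by
    intro s
    rw [hacast]
    field_simp
    ring
  have hIcc : ∀ s : ℝ, 0 ≤ s → s ≤ 1 → 0 ≤ ((rn:ℝ)+s)/(n:ℝ)^k ∧ ((rn:ℝ)+s)/(n:ℝ)^k ≤ 1 := by
    intro s h0 h1
    constructor
    · positivity
    · rw [div_le_one hk0]
      have : (rn:ℝ) + 1 ≤ (n:ℝ)^k := by
        have : ((rn+1:ℕ):ℝ) ≤ ((n^k:ℕ):ℝ) := by exact_mod_cast hrnlt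
        push_cast at this
        linarith
      linarith
  have hPhiPt : ∀ s : ℝ, 0 ≤ s → s ≤ 1 →
      Phi n (((a:ℝ)+s)/(n:ℝ)^k) = phi n (((rn:ℝ)+s)/(n:ℝ)^k) + (M:ℝ) := by
    intro s h0 h1
    rw [hpt s, Phi_add_int, Phi_eq_phi n _ hn (hIcc s h0 h1).1 (hIcc s h0 h1).2]
  have h0' : Phi n ((a:ℝ)/(n:ℝ)^k) = EE n k rn + (M:ℝ) := by
    have := hPhiPt 0 le_rfl zero_le_one
    rw [add_zero] at this
    rw [this]
    congr 1
    have : ((rn:ℝ)+0)/(n:ℝ)^k = ((rn:ℕ):ℝ)/(n:ℝ)^k := by ring_nf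
    rw [this, phi_coe n k rn hn hrnlt.le]
  have h1' : Phi n (((a:ℝ)+1)/(n:ℝ)^k) = EE n k (rn+1) + (M:ℝ) := by
    rw [hPhiPt 1 zero_le_one le_rfl]
    congr 1
    have : ((rn:ℝ)+1)/(n:ℝ)^k = (((rn+1:ℕ)):ℝ)/(n:ℝ)^k := by push_cast; ring_nf
    rw [this, phi_coe n k (rn+1) hn hrnlt]
  constructor
  · obtain ⟨mm, hmm⟩ := EE_diff_pow n k rn hn hrnlt
    exact ⟨mm, by rw [h0', h1']; linarith⟩
  · intro t ht0 ht1
    rw [hPhiPt t ht0 ht1, h0', h1']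
    rw [phi_selfsim n k rn t hn hrnlt ht0 ht1]
    ring

lemma EE_surj_dyadic (n : ℕ) (hn : 2 ≤ n) :
    ∀ j b : ℕ, b ≤ 2^j → ∃ k a : ℕ, a ≤ n^k ∧ EE n k a = (b:ℝ)/2^j := by
  intro j
  induction j with
  | zero =>
      intro b hb
      rw [pow_zero] at hb
      interval_cases b
      · exact ⟨0, 0, by simp, by simp [EE_zero]⟩
      · refine ⟨0, 1, by simp, ?_⟩
        have h := EE_top n 0 hn
        rw [pow_zero] at h
        rw [h]; norm_num
  | succ j ih =>
      intro b hb
      rcases Nat.eq_zero_or_pos b with hb0 | hb0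
      · exact ⟨0, 0, by simp, by simp [hb0, EE_zero]⟩
      rcases eq_or_lt_of_le hb with hbtop | hbtop
      · refine ⟨0, 1, by simp, ?_⟩
        have h := EE_top n 0 hn
        rw [pow_zero] at h
        rw [h, hbtop]
        push_cast
        rw [div_self (by positivity)]
      -- main case : 0 < b < 2^(j+1)
      set P : ℕ → Prop := fun d => (2^d - 1) * 2^(j+1) ≤ b * 2^d with hP
      have hP0 : P 0 := by simp [hP]
      set d := Nat.findGreatest P (n-1) with hd
      have hPd : P d := Nat.findGreatest_spec (Nat.zero_le _) hP0
      have hdle : d ≤ n - 1 := Nat.findGreatest_le _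
      have h2d1 : (1:ℕ) ≤ 2^d := Nat.one_le_two_pow
      rcases lt_or_eq_of_le hdle with hdlt | hdeq
      · -- case d < n - 1, cl n d = d+1
        have hnot : ¬ P (d+1) := Nat.findGreatest_is_greatest (n := n-1) (P := P) (by omega) (by omega)
        have hnot' : b * 2^(d+1) < (2^(d+1) - 1) * 2^(j+1) := by
          simp only [hP, not_le] at hnot
          exact hnot
        set b' : ℕ := b * 2^d - (2^d - 1) * 2^(j+1) with hb'
        have hge : (2^d - 1) * 2^(j+1) ≤ b * 2^d := hPd
        have h2d1' : (1:ℕ) ≤ 2^(d+1) := Nat.one_le_two_pow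
        have hb'lt : b' ≤ 2^j := by
          have hcastZ : (b':ℤ) = (b:ℤ) * 2^d - ((2:ℤ)^d - 1) * 2^(j+1) := by
            rw [hb']
            push_cast [Nat.cast_sub hge, Nat.cast_sub h2d1]
            ring
          have hnotZ : (b:ℤ) * 2^(d+1) < ((2:ℤ)^(d+1) - 1) * 2^(j+1) := by
            have := hnot'
            zify [h2d1'] at this
            exact this
          have goalZ : (b':ℤ) ≤ 2^j := by
            rw [hcastZ]
            have e1 : (2:ℤ)^(d+1) = 2 * 2^d := by rw [pow_succ]; ring
            have e2 : (2:ℤ)^(j+1) = 2 * 2^j := by rw [pow_succ]; ring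
            rw [e1, e2] at hnotZ
            nlinarith [hnotZ]
          exact_mod_cast goalZ
        obtain ⟨k, a, hak, hEa⟩ := ih b' hb'lt
        refine ⟨k+1, d * n^k + a, ?_, ?_⟩
        · have h3 : (n^k - 1) + 1 = n^k := by
            have : 0 < n^k := Nat.pow_pos (by omega)
            omega
          calc d * n^k + a ≤ (n-1) * n^k + n^k := Nat.add_le_add (Nat.mul_le_mul_right _ (by omega)) hak
            _ = n^(k+1) := by
                have h4 : n - 1 + 1 = n := by omega
                calc (n-1) * n^k + n^k = ((n-1) + 1) * n^k := by ring
                  _ = n * n^k := by rw [h4]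
                  _ = n^(k+1) := by rw [pow_succ]; ring
        · rw [EE_split n k d a hn (by omega) hak, hEa]
          have hcl : cl n d = d + 1 := by unfold cl; omega
          have hb'cast : ((b':ℕ):ℝ) = (b:ℝ) * 2^d - ((2:ℝ)^d - 1) * 2^(j+1) := by
            rw [hb']
            push_cast [Nat.cast_sub hge, Nat.cast_sub h2d1]
            ring
          rw [lam, hcl, sO, hb'cast]
          simp only [inv_pow]
          field_simp
          ring
      · -- case d = n - 1, cl n d = n-1
        set e : ℕ := n - 2 with he
        have hde : d = e + 1 := by omega
        have hPd' : (2^(e+1) - 1) * 2^(j+1) ≤ b * 2^(e+1) := by rw [← hde]; exact hPd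
        set b' : ℕ := b * 2^e - (2^(e+1) - 1) * 2^j with hb'
        have h2e1 : (1:ℕ) ≤ 2^(e+1) := Nat.one_le_two_pow
        have hge : (2^(e+1) - 1) * 2^j ≤ b * 2^e := by
          have hgeZ : ((2:ℤ)^(e+1) - 1) * 2^j ≤ (b:ℤ) * 2^e := by
            have h5 : ((2:ℤ)^(e+1) - 1) * 2^(j+1) ≤ (b:ℤ) * 2^(e+1) := by
              have := hPd'
              zify [h2e1] at this
              exact this
            have e1 : (2:ℤ)^(e+1) = 2 * 2^e := by rw [pow_succ]; ring
            have e2 : (2:ℤ)^(j+1) = 2 * 2^j := by rw [pow_succ]; ring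
            rw [e2] at h5
            conv_rhs at h5 => rw [e1]
            nlinarith [h5]
          zify [h2e1]
          exact hgeZ
        have hb'lt : b' ≤ 2^j := by
          have hbZ : (b:ℤ) < 2^(j+1) := by exact_mod_cast hbtop
          have goalZ : (b:ℤ) * 2^e - ((2:ℤ)^(e+1) - 1) * 2^j ≤ 2^j := by
            have e1 : (2:ℤ)^(e+1) = 2 * 2^e := by rw [pow_succ]; ring
            have e2 : (2:ℤ)^(j+1) = 2 * 2^j := by rw [pow_succ]; ring
            rw [e2] at hbZ
            have h2e0 : (0:ℤ) < 2^e := by positivity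
            nlinarith [hbZ, h2e0]
          have hcastZ : (b':ℤ) = (b:ℤ) * 2^e - ((2:ℤ)^(e+1) - 1) * 2^j := by
            rw [hb']
            push_cast [Nat.cast_sub hge, Nat.cast_sub h2e1]
            ring
          have : (b':ℤ) ≤ 2^j := by rw [hcastZ]; exact goalZ
          exact_mod_cast this
        obtain ⟨k, a, hak, hEa⟩ := ih b' hb'lt
        refine ⟨k+1, d * n^k + a, ?_, ?_⟩
        · have h3 : 0 < n^k := Nat.pow_pos (by omega)
          calc d * n^k + a ≤ (n-1) * n^k + n^k := Nat.add_le_add (Nat.mul_le_mul_right _ (by omega)) hak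
            _ = n^(k+1) := by
                have h4 : n - 1 + 1 = n := by omega
                calc (n-1) * n^k + n^k = ((n-1) + 1) * n^k := by ring
                  _ = n * n^k := by rw [h4]
                  _ = n^(k+1) := by rw [pow_succ]; ring
        · rw [EE_split n k d a hn (by omega) hak, hEa]
          have hcl : cl n d = e + 1 := by unfold cl; omega
          have hb'cast : ((b':ℕ):ℝ) = (b:ℝ) * 2^e - ((2:ℝ)^(e+1) - 1) * 2^j := by
            rw [hb']
            push_cast [Nat.cast_sub hge, Nat.cast_sub h2e1]
            ring
          rw [lam, hcl, sO, hde, hb'cast]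
          simp only [inv_pow]
          field_simp
          ring

lemma isNAdic_rep (n : ℕ) (x : ℝ) (hn : 2 ≤ n) (hx : IsNAdic n x) (h0 : 0 ≤ x) (h1 : x < 1) :
    ∃ k a : ℕ, a < n^k ∧ x = (a:ℝ)/(n:ℝ)^k := by
  obtain ⟨a, k, rfl⟩ := hx
  have hk0 : (0:ℝ) < (n:ℝ)^k := by
    have : (0:ℕ) < n := by omega
    positivity
  have ha0 : 0 ≤ a := by
    by_contra hneg
    push_neg at hneg
    have : ((a:ℝ)) < 0 := by exact_mod_cast hneg
    have : (a:ℝ)/(n:ℝ)^k < 0 := div_neg_of_neg_of_pos this hk0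
    linarith
  have halt : (a:ℝ) < (n:ℝ)^k := by
    rw [div_lt_one hk0] at h1
    exact h1
  refine ⟨k, a.toNat, ?_, ?_⟩
  · have h9 : ((a.toNat:ℤ):ℝ) = (a:ℝ) := by rw [Int.toNat_of_nonneg ha0]
    have h10 : ((a.toNat:ℕ):ℝ) < ((n^k:ℕ):ℝ) := by push_cast; push_cast at h9; rw [h9]; push_cast at halt ⊢; exact halt
    exact_mod_cast h10
  · congr 1
    have h9 : ((a.toNat:ℤ):ℝ) = (a:ℝ) := by rw [Int.toNat_of_nonneg ha0]
    exact_mod_cast h9.symm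

lemma isNAdic_add_int (n : ℕ) (x : ℝ) (m : ℤ) (hn : 2 ≤ n) (hx : IsNAdic n x) :
    IsNAdic n (x + m) := by
  obtain ⟨a, k, rfl⟩ := hx
  have hk0 : (0:ℝ) < (n:ℝ)^k := by
    have : (0:ℕ) < n := by omega
    positivity
  refine ⟨a + m * (n:ℤ)^k, k, ?_⟩
  have hcast : (((n:ℤ)^k : ℤ):ℝ) = (n:ℝ)^k := by push_cast; ring
  push_cast
  field_simp

lemma Phi_isDyadic (n : ℕ) (x : ℝ) (hn : 2 ≤ n) (hx : IsNAdic n x) :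
    IsNAdic 2 (Phi n x) := by
  have hfr : IsNAdic n (Int.fract x) := by
    have := isNAdic_add_int n x (-⌊x⌋) hn hx
    simpa [Int.fract, sub_eq_add_neg] using this
  obtain ⟨k, a, halt, hrep⟩ := isNAdic_rep n _ hn hfr (Int.fract_nonneg x) (Int.fract_lt_one x)
  obtain ⟨b, m, hbm⟩ := EE_dyadic n k a
  refine ⟨(b:ℤ) + ⌊x⌋ * 2^m, m, ?_⟩
  rw [Phi, hrep, phi_coe n k a hn halt.le, hbm]
  have h2m : (0:ℝ) < (2:ℝ)^m := by positivity
  push_cast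
  field_simp
  ring

lemma Phi_dyadic_surj (n : ℕ) (y : ℝ) (hn : 2 ≤ n) (hy : IsNAdic 2 y) :
    ∃ x : ℝ, IsNAdic n x ∧ Phi n x = y := by
  have hfr : IsNAdic 2 (Int.fract y) := by
    have := isNAdic_add_int 2 y (-⌊y⌋) (le_refl 2) hy
    simpa [Int.fract, sub_eq_add_neg] using this
  obtain ⟨j, b, hblt, hrep0⟩ := isNAdic_rep 2 _ (le_refl 2) hfr (Int.fract_nonneg y) (Int.fract_lt_one y)
  have hrep : Int.fract y = (b:ℝ)/(2:ℝ)^j := by rw [hrep0]; norm_num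
  obtain ⟨k, a, hak, hEa⟩ := EE_surj_dyadic n hn j b hblt.le
  have halt : a < n^k := by
    rcases lt_or_eq_of_le hak with h | h
    · exact h
    · exfalso
      rw [h, EE_top n k hn] at hEa
      have hfr1 := Int.fract_lt_one y
      rw [hrep] at hfr1
      rw [← hEa] at hfr1
      linarith
  have hk0 : (0:ℝ) < (n:ℝ)^k := by
    have : (0:ℕ) < n := by omega
    positivity
  refine ⟨(a:ℝ)/(n:ℝ)^k + (⌊y⌋:ℤ), ?_, ?_⟩
  · exact isNAdic_add_int n _ ⌊y⌋ hn ⟨a, k, by push_cast; ring⟩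
  · rw [Phi_add_int, Phi_eq_phi n _ hn (by positivity) (by rw [div_le_one hk0]; exact_mod_cast halt.le)]
    rw [phi_coe n k a hn halt.le, hEa, ← hrep]
    exact Int.fract_add_floor y

lemma coe_int_circle (m : ℤ) : (((m:ℝ)) : Circle) = 0 := by
  apply (QuotientAddGroup.eq_zero_iff _).mpr
  exact ⟨m, by simp⟩

lemma coe_add_int_circle (x : ℝ) (m : ℤ) : (((x + m : ℝ)) : Circle) = (x : Circle) := by
  have h1 : ((x + m : ℝ) : Circle) = (x : Circle) + ((m:ℝ) : Circle) := by
    rw [AddCircle.coe_add]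
  rw [h1, coe_int_circle, add_zero]

lemma Phi_continuous (n : ℕ) (hn : 2 ≤ n) : Continuous (Phi n) :=
  (PhiIso n hn).toHomeomorph.continuous

lemma Psi_continuous (n : ℕ) (hn : 2 ≤ n) : Continuous ((PhiIso n hn).symm : ℝ → ℝ) :=
  (PhiIso n hn).symm.toHomeomorph.continuous

lemma phi_resp (n : ℕ) (hn : 2 ≤ n) : ∀ a b : ℝ,
    (QuotientAddGroup.leftRel (AddSubgroup.zmultiples (1:ℝ))) a b →
    ((Phi n a : ℝ) : Circle) = ((Phi n b : ℝ) : Circle) := by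
  intro a b hab
  rw [QuotientAddGroup.leftRel_apply] at hab
  obtain ⟨m, hm⟩ := hab
  have hm' : (m:ℝ) = -a + b := by simpa using hm
  have hb : b = a + m := by rw [hm']; ring
  rw [hb, Phi_add_int]
  exact (coe_add_int_circle (Phi n a) m).symm

lemma psi_resp (n : ℕ) (hn : 2 ≤ n) : ∀ a b : ℝ,
    (QuotientAddGroup.leftRel (AddSubgroup.zmultiples (1:ℝ))) a b →
    (((PhiIso n hn).symm a : ℝ) : Circle) = (((PhiIso n hn).symm b : ℝ) : Circle) := by
  intro a b hab
  rw [QuotientAddGroup.leftRel_apply] at hab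
  obtain ⟨m, hm⟩ := hab
  have hm' : (m:ℝ) = -a + b := by simpa using hm
  have hb : b = a + m := by rw [hm']; ring
  rw [hb, Psi_add_int]
  exact (coe_add_int_circle _ m).symm

/-- the conversion homeomorphism of the circle -/
def cH (n : ℕ) (hn : 2 ≤ n) : Circle ≃ₜ Circle where
  toFun := fun p => Quotient.liftOn' p (fun x => ((Phi n x : ℝ) : Circle)) (phi_resp n hn)
  invFun := fun p => Quotient.liftOn' p (fun x => (((PhiIso n hn).symm x : ℝ) : Circle)) (psi_resp n hn)
  left_inv := by
    intro p
    induction p using Quotient.inductionOn' with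
    | h x =>
        show Quotient.liftOn' (((Phi n x : ℝ) : Circle)) _ _ = _
        have : ((Phi n x : ℝ) : Circle) = Quotient.mk'' (Phi n x) := rfl
        rw [this]
        show (((PhiIso n hn).symm (Phi n x) : ℝ) : Circle) = _
        rw [Psi_Phi n hn]
  right_inv := by
    intro p
    induction p using Quotient.inductionOn' with
    | h x =>
        show Quotient.liftOn' ((((PhiIso n hn).symm x : ℝ) : Circle)) _ _ = _
        have : (((PhiIso n hn).symm x : ℝ) : Circle) = Quotient.mk'' ((PhiIso n hn).symm x) := rfl
        rw [this]
        show ((Phi n ((PhiIso n hn).symm x) : ℝ) : Circle) = _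
        rw [Phi_Psi n hn]
  continuous_toFun := by
    apply Continuous.quotient_liftOn'
    exact continuous_quotient_mk'.comp (Phi_continuous n hn)
  continuous_invFun := by
    apply Continuous.quotient_liftOn'
    exact continuous_quotient_mk'.comp (Psi_continuous n hn)

lemma cH_apply (n : ℕ) (hn : 2 ≤ n) (x : ℝ) :
    cH n hn (x : Circle) = ((Phi n x : ℝ) : Circle) := rfl

lemma cH_symm_apply (n : ℕ) (hn : 2 ≤ n) (x : ℝ) :
    (cH n hn).symm (x : Circle) = (((PhiIso n hn).symm x : ℝ) : Circle) := rfl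

lemma exists_gap (v : ℕ → ℕ) : ∀ (m q : ℕ), v 0 ≤ q → q < v m →
    ∃ i, i < m ∧ v i ≤ q ∧ q < v (i+1) := by
  intro m
  induction m with
  | zero => intro q h0 hm; omega
  | succ m ih =>
      intro q h0 hm
      rcases le_or_gt (v m) q with h | h
      · exact ⟨m, by omega, h, hm⟩
      · obtain ⟨i, hi, h1, h2⟩ := ih q h0 h
        exact ⟨i, by omega, h1, h2⟩

lemma isNAdic_sub (n : ℕ) (x y : ℝ) (hn : 2 ≤ n) (hx : IsNAdic n x) (hy : IsNAdic n y) :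
    IsNAdic n (x - y) := by
  obtain ⟨a, k, rfl⟩ := hx
  obtain ⟨b, j, rfl⟩ := hy
  have hn0 : ((n:ℝ)) ≠ 0 := by
    have : (0:ℕ) < n := by omega
    positivity
  refine ⟨a * (n:ℤ)^j - b * (n:ℤ)^k, k + j, ?_⟩
  push_cast
  rw [pow_add]
  field_simp

lemma isNAdic_zpow_mul (n : ℕ) (x : ℝ) (s : ℤ) (hn : 2 ≤ n) (hx : IsNAdic n x) :
    IsNAdic n ((n:ℝ)^(s:ℤ) * x) := by
  obtain ⟨a, k, rfl⟩ := hx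
  have hn0 : ((n:ℝ)) ≠ 0 := by
    have : (0:ℕ) < n := by omega
    positivity
  rcases le_or_gt 0 s with hs | hs
  · refine ⟨a * (n:ℤ)^(s.toNat), k, ?_⟩
    have hzs : (n:ℝ)^(s:ℤ) = (n:ℝ)^(s.toNat) := by
      rw [← zpow_natCast]
      congr 1
      omega
    rw [hzs]
    push_cast
    field_simp
  · refine ⟨a, k + (-s).toNat, ?_⟩
    have hzs : (n:ℝ)^(s:ℤ) = ((n:ℝ)^((-s).toNat))⁻¹ := by
      rw [← zpow_natCast, ← zpow_neg]
      congr 1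
      omega
    rw [hzs, pow_add]
    field_simp

/-- an `n`-adic point of `[0,1]` has a standard representation -/
lemma isNAdic_rep_closed (n : ℕ) (x : ℝ) (hn : 2 ≤ n) (hx : IsNAdic n x)
    (h0 : 0 ≤ x) (h1 : x ≤ 1) : ∃ k a : ℕ, a ≤ n^k ∧ x = (a:ℝ)/(n:ℝ)^k := by
  rcases lt_or_eq_of_le h1 with h | h
  · obtain ⟨k, a, hlt, heq⟩ := isNAdic_rep n x hn hx h0 h
    exact ⟨k, a, hlt.le, heq⟩
  · refine ⟨0, 1, by simp, ?_⟩
    rw [h]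
    norm_num


lemma t_mono (t : ℕ → ℝ) (m : ℕ) (hinc : ∀ i, i < m → t i < t (i+1)) :
    ∀ i j, i ≤ j → j ≤ m → t i ≤ t j := by
  intro i j hij hjm
  induction j with
  | zero =>
      have : i = 0 := by omega
      rw [this]
  | succ j ihj =>
      rcases Nat.eq_or_lt_of_le hij with h | h
      · rw [h]
      · have h1 : t i ≤ t j := ihj (by omega) (by omega)
        have h2 : t j < t (j+1) := hinc j (by omega)
        linarith

/-- coe at `nat/n^N` -/
lemma Phi_coe_nat (n q N : ℕ) (hn : 2 ≤ n) (hq : q ≤ n^N) :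
    Phi n ((q:ℝ)/(n:ℝ)^N) = EE n N q := by
  have hk0 : (0:ℝ) < (n:ℝ)^N := by
    have : (0:ℕ) < n := by omega
    positivity
  have hle : (q:ℝ)/(n:ℝ)^N ≤ 1 := by
    rw [div_le_one hk0]
    have : ((q:ℕ):ℝ) ≤ ((n^N : ℕ):ℝ) := by exact_mod_cast hq
    push_cast at this ⊢
    linarith
  rw [Phi_eq_phi n _ hn (by positivity) hle, phi_coe n N q hn hq]

/-- `F` maps `n`-adics to `n`-adics, given the circle-level image condition -/
lemma lift_maps_nadic (n : ℕ) (g : Circle ≃ₜ Circle) (F : ℝ → ℝ) (hn : 2 ≤ n)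
    (hlift : IsLift g F) (him : g '' nAdicPoints n = nAdicPoints n)
    (x : ℝ) (hx : IsNAdic n x) : IsNAdic n (F x) := by
  have hmem : (x : Circle) ∈ nAdicPoints n := ⟨x, hx, rfl⟩
  have : g (x : Circle) ∈ nAdicPoints n := by
    rw [← him]
    exact ⟨_, hmem, rfl⟩
  obtain ⟨w, hw, hweq⟩ := this
  rw [hlift x] at hweq
  -- ↑(F x) = ↑w  hence  F x = w + integer
  have : (-(F x) + w) ∈ AddSubgroup.zmultiples (1:ℝ) := by
    rw [← QuotientAddGroup.leftRel_apply]
    exact Quotient.exact' hweq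
  obtain ⟨mz, hmz⟩ := this
  have hmz' : (mz:ℝ) = -(F x) + w := by simpa using hmz
  have : F x = w + (-mz : ℤ) := by push_cast; linarith
  rw [this]
  exact isNAdic_add_int n w (-mz) hn hw

theorem conj_inT (n : ℕ) (hn : 2 ≤ n) (g : Circle ≃ₜ Circle) (hg : InT n g) :
    InT 2 ((cH n hn).symm.trans (g.trans (cH n hn))) := by
  obtain ⟨him, F, hFmono, hFlift, hFper, m, t, slope, c,
    hm0, ht0, htm, htinc, htnadic, haff⟩ := hg
  have hnR : (0:ℝ) < (n:ℝ) := by exact_mod_cast (by omega : 0 < n)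
  have hnRne : ((n:ℝ)) ≠ 0 := hnR.ne'
  set PsiF : ℝ → ℝ := ((PhiIso n hn).symm : ℝ → ℝ) with hPsiF
  set G : ℝ → ℝ := fun y => Phi n (F (PsiF y)) with hG
  have hflip : ⇑((cH n hn).symm.trans (g.trans (cH n hn))) =
      ⇑(cH n hn) ∘ ⇑g ∘ ⇑(cH n hn).symm := rfl
  -- image of dyadic points under cH
  have hcHim : (cH n hn) '' nAdicPoints n = nAdicPoints 2 := by
    apply Set.eq_of_subset_of_subset
    · rintro p ⟨q, ⟨x, hx, rfl⟩, rfl⟩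
      exact ⟨Phi n x, Phi_isDyadic n x hn hx, by rw [cH_apply]⟩
    · rintro p ⟨y, hy, rfl⟩
      obtain ⟨x, hx, hPx⟩ := Phi_dyadic_surj n y hn hy
      exact ⟨(x : Circle), ⟨x, hx, rfl⟩, by rw [cH_apply, hPx]⟩
  have hsymim : (cH n hn).symm '' nAdicPoints 2 = nAdicPoints n := by
    rw [← hcHim]
    exact (cH n hn).toEquiv.symm_image_image _
  constructor
  · -- image condition
    rw [hflip, Set.image_comp, Set.image_comp, hsymim, him, hcHim]
  -- the lift data
  refine ⟨G, ?_, ?_, ?_, ?_⟩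
  · -- strict mono
    intro x y hxy
    exact Phi_strictMono n hn (hFmono ((PhiIso n hn).symm.strictMono hxy))
  · -- lift
    intro x
    show (cH n hn) (g ((cH n hn).symm (x : Circle))) = _
    rw [cH_symm_apply, hFlift, cH_apply]
  · -- periodicity
    intro x
    show Phi n (F (PsiF (x+1))) = Phi n (F (PsiF x)) + 1
    have h1 : PsiF (x+1) = PsiF x + 1 := by
      have := Psi_add_int n hn x 1
      simpa using this
    have h2 : Phi n (F (PsiF x) + 1) = Phi n (F (PsiF x)) + 1 := by
      have := Phi_add_int n (F (PsiF x)) 1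
      simpa using this
    rw [h1, hFper, h2]
  -- the piecewise affine structure
  -- bounds on breakpoints
  have htb : ∀ i, i ≤ m → 0 ≤ t i ∧ t i ≤ 1 := fun i hi =>
    ⟨ht0 ▸ t_mono t m htinc 0 i (by omega) hi, htm ▸ t_mono t m htinc i m hi le_rfl⟩
  -- representations of breakpoints
  have hrepT : ∀ i, i ≤ m → ∃ e v : ℕ, v ≤ n^e ∧ t i = (v:ℝ)/(n:ℝ)^e := fun i hi => by
    obtain ⟨e, v, hv, heq⟩ := isNAdic_rep_closed n (t i) hn (htnadic i hi) (htb i hi).1 (htb i hi).2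
    exact ⟨e, v, hv, heq⟩
  choose eT vT hvT htT using hrepT
  -- representations of the constants
  have hcnadic : ∀ i, i < m → IsNAdic n (c i) := by
    intro i hi
    have hF : F (t i) = (n:ℝ)^(slope i) * (t i) + c i :=
      haff i hi (t i) ⟨le_rfl, (htinc i hi).le⟩
    have h1 : IsNAdic n (F (t i)) :=
      lift_maps_nadic n g F hn hFlift him (t i) (htnadic i (by omega))
    have h2 : IsNAdic n ((n:ℝ)^(slope i) * t i) :=
      isNAdic_zpow_mul n (t i) (slope i) hn (htnadic i (by omega))
    have h3 : c i = F (t i) - (n:ℝ)^(slope i) * t i := by rw [hF]; ring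
    rw [h3]
    exact isNAdic_sub n _ _ hn h1 h2
  choose bC fC hbC using hcnadic
  -- the common level N
  set N : ℕ := (Finset.range (m+1)).sup (fun i =>
      (if h : i ≤ m then eT i h else 0) ⊔
      (if h : i < m then ((slope i).toNat ⊔ (slope i + (fC i h : ℤ)).toNat) else 0)) with hNdef
  have hsup : ∀ i, i ≤ m →
      ((if h : i ≤ m then eT i h else 0) ⊔
      (if h : i < m then ((slope i).toNat ⊔ (slope i + (fC i h : ℤ)).toNat) else 0)) ≤ N := by
    intro i hi
    rw [hNdef]
    exact Finset.le_sup (f := fun i => (if h : i ≤ m then eT i h else 0) ⊔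
      (if h : i < m then ((slope i).toNat ⊔ (slope i + (fC i h : ℤ)).toNat) else 0))
      (Finset.mem_range.mpr (by omega : i < m+1))
  have hNe : ∀ i (hi : i ≤ m), eT i hi ≤ N := by
    intro i hi
    have := hsup i hi
    rw [dif_pos hi] at this
    exact le_trans le_sup_left this
  have hNs : ∀ i (hi : i < m), slope i ≤ (N:ℤ) ∧ slope i + (fC i hi : ℤ) ≤ (N:ℤ) := by
    intro i hi
    have h1 := hsup i hi.le
    rw [dif_pos hi] at h1
    have h2 : (slope i).toNat ≤ N := le_trans (le_trans le_sup_left le_sup_right) h1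
    have h3 : (slope i + (fC i hi : ℤ)).toNat ≤ N := le_trans (le_trans le_sup_right le_sup_right) h1
    omega
  have hpNR : (0:ℝ) < (n:ℝ)^N := by positivity
  have hpN : 0 < n^N := Nat.pow_pos (by omega)
  -- breakpoints as multiples of n^{-N}
  set V : ℕ → ℕ := fun i => if h : i ≤ m then vT i h * n^(N - eT i h) else 0 with hVdef
  have hVt : ∀ i (hi : i ≤ m), t i = (V i : ℝ)/(n:ℝ)^N ∧ V i ≤ n^N := by
    intro i hi
    have hee : n^(N - eT i hi) * n^(eT i hi) = n^N := by
      rw [← pow_add]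
      congr 1
      have := hNe i hi
      omega
    constructor
    · rw [hVdef]
      simp only [dif_pos hi]
      rw [htT i hi]
      have heeR : ((n:ℝ))^(N - eT i hi) * ((n:ℝ))^(eT i hi) = ((n:ℝ))^N := by
        rw [← pow_add]
        congr 1
        have := hNe i hi
        omega
      rw [div_eq_div_iff (by positivity : ((n:ℝ))^(eT i hi) ≠ 0) hpNR.ne']
      push_cast
      rw [← heeR]
      ring
    · rw [hVdef]
      simp only [dif_pos hi]
      calc vT i hi * n^(N - eT i hi) ≤ n^(eT i hi) * n^(N - eT i hi) :=
            Nat.mul_le_mul_right _ (hvT i hi)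
        _ = n^N := by rw [mul_comm]; exact hee
  have hVcast : ∀ i (hi : i ≤ m), ((V i : ℕ):ℝ) = t i * (n:ℝ)^N := by
    intro i hi
    rw [(hVt i hi).1]
    field_simp
  have hV0 : V 0 = 0 := by
    have := hVcast 0 (by omega)
    rw [ht0] at this
    simp at this
    exact_mod_cast this
  have hVm : V m = n^N := by
    have := hVcast m le_rfl
    rw [htm, one_mul] at this
    have h2 : ((V m : ℕ):ℝ) = ((n^N : ℕ):ℝ) := by push_cast; push_cast at this; linarith
    exact_mod_cast h2
  have hVmono : ∀ i, i < m → V i < V (i+1) := by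
    intro i hi
    have h1 := hVcast i hi.le
    have h2 := hVcast (i+1) (by omega)
    have h3 := htinc i hi
    have : ((V i : ℕ):ℝ) < ((V (i+1) : ℕ):ℝ) := by
      rw [h1, h2]
      exact mul_lt_mul_of_pos_right h3 hpNR
    exact_mod_cast this
  -- the affine pieces of G
  have key : ∀ q : ℕ, ∃ (z : ℤ) (C : ℝ), q < n^N →
      ∀ y ∈ Set.Icc (EE n N q) (EE n N (q+1)), G y = (2:ℝ)^z * y + C := by
    intro q
    by_cases hq : q < n^N
    swap
    · exact ⟨0, 0, fun h => absurd h hq⟩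
    obtain ⟨i, hi, hviq, hqv1⟩ := exists_gap V m q (by omega) (by omega)
    -- interval inclusion
    have hsubI : Set.Icc ((q:ℝ)/(n:ℝ)^N) (((q:ℝ)+1)/(n:ℝ)^N) ⊆ Set.Icc (t i) (t (i+1)) := by
      apply Set.Icc_subset_Icc
      · rw [(hVt i hi.le).1]
        rw [div_le_div_iff₀ hpNR hpNR]
        have : ((V i : ℕ):ℝ) ≤ (q:ℝ) := by exact_mod_cast hviq
        nlinarith
      · rw [(hVt (i+1) (by omega)).1]
        rw [div_le_div_iff₀ hpNR hpNR]
        have : ((q:ℝ)+1) ≤ ((V (i+1) : ℕ):ℝ) := by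
          have h9 : ((q+1 : ℕ):ℝ) ≤ ((V (i+1) : ℕ):ℝ) := by exact_mod_cast hqv1
          push_cast at h9
          linarith
        nlinarith
    -- the power scales
    set K : ℕ := ((N:ℤ) - slope i).toNat with hKdef
    have hK : (K:ℤ) = (N:ℤ) - slope i := by
      rw [hKdef]
      exact Int.toNat_of_nonneg (by have := (hNs i hi).1; omega)
    have hKf : fC i hi ≤ K := by
      have h2 := (hNs i hi).2
      omega
    have hpKR : (0:ℝ) < (n:ℝ)^K := by positivity
    set A : ℤ := (q:ℤ) + bC i hi * (n:ℤ)^(K - fC i hi) with hAdef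
    have hzpow : (n:ℝ)^(slope i) * (((n:ℝ))^N)⁻¹ = (((n:ℝ))^K)⁻¹ := by
      have hslope : slope i = (N:ℤ) - (K:ℤ) := by omega
      rw [hslope, zpow_sub₀ hnRne, zpow_natCast, zpow_natCast]
      field_simp
    have hpowKf : (n:ℝ)^(K - fC i hi) * (n:ℝ)^(fC i hi) = (n:ℝ)^K := by
      rw [← pow_add]
      congr 1
      omega
    have hAcast : ((A:ℤ):ℝ) = (q:ℝ) + (bC i hi : ℝ) * (n:ℝ)^(K - fC i hi) := by
      rw [hAdef]
      push_cast
      ring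
    -- the affine claim for F on the standard interval
    have hclaim : ∀ u:ℝ, 0 ≤ u → u ≤ 1 → F (((q:ℝ)+u)/(n:ℝ)^N) = (((A:ℤ):ℝ) + u)/(n:ℝ)^K := by
      intro u h0 h1
      have hmem : ((q:ℝ)+u)/(n:ℝ)^N ∈ Set.Icc ((q:ℝ)/(n:ℝ)^N) (((q:ℝ)+1)/(n:ℝ)^N) := by
        constructor
        · apply div_le_div_of_nonneg_right ?_ hpNR.le |>.trans le_rfl
          linarith
        · apply div_le_div_of_nonneg_right ?_ hpNR.le |>.trans le_rfl
          linarith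
      rw [haff i hi _ (hsubI hmem), hbC i hi, hAcast]
      have e1 : (n:ℝ)^(slope i) * (((q:ℝ)+u)/(n:ℝ)^N) = ((q:ℝ)+u)/(n:ℝ)^K := by
        rw [div_eq_mul_inv, div_eq_mul_inv, ← hzpow]
        ring
      rw [e1]
      have split : ((q:ℝ) + (bC i hi:ℝ) * (n:ℝ)^(K - fC i hi) + u)/(n:ℝ)^K
          = ((q:ℝ)+u)/(n:ℝ)^K + ((bC i hi:ℝ) * (n:ℝ)^(K - fC i hi))/(n:ℝ)^K := by ring
      rw [split]
      have e2 : (bC i hi:ℝ)/(n:ℝ)^(fC i hi) = ((bC i hi:ℝ) * (n:ℝ)^(K - fC i hi))/(n:ℝ)^K := by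
        rw [div_eq_div_iff (by positivity : ((n:ℝ))^(fC i hi) ≠ 0) hpKR.ne']
        rw [← hpowKf]
        ring
      rw [e2]
    -- Phi data on both sides
    have hq1 : q + 1 ≤ n^N := hq
    have hPq : Phi n ((q:ℝ)/(n:ℝ)^N) = EE n N q := Phi_coe_nat n q N hn hq.le
    have hPq1 : Phi n (((q:ℝ)+1)/(n:ℝ)^N) = EE n N (q+1) := by
      have h9 := Phi_coe_nat n (q+1) N hn hq1
      push_cast at h9
      exact h9
    obtain ⟨m1, hm1⟩ := EE_diff_pow n N q hn hq
    obtain ⟨⟨m2, hm2⟩, hsim2⟩ := Phi_selfsim n hn A K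
    obtain ⟨_, hsimq⟩ := Phi_selfsim n hn (q:ℤ) N
    simp only [Int.cast_natCast] at hsimq
    set W1 : ℝ := EE n N (q+1) - EE n N q with hW1def
    set W2 : ℝ := Phi n ((((A:ℤ):ℝ)+1)/(n:ℝ)^K) - Phi n (((A:ℤ):ℝ)/(n:ℝ)^K) with hW2def
    have hW1pos : (0:ℝ) < W1 := by rw [hm1]; positivity
    have hW2pos : (0:ℝ) < W2 := by rw [hm2]; positivity
    have hRatio : (2:ℝ)^((m1:ℤ) - (m2:ℤ)) = W2 / W1 := by
      have hz : ((2:ℝ))^((m1:ℤ) - (m2:ℤ)) = (2:ℝ)^m1 / (2:ℝ)^m2 := by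
        rw [zpow_sub₀ two_ne_zero, zpow_natCast, zpow_natCast]
      rw [hz, hm1, hm2]
      simp only [inv_pow]
      field_simp
    refine ⟨(m1:ℤ) - (m2:ℤ),
      Phi n (((A:ℤ):ℝ)/(n:ℝ)^K) - (W2/W1) * EE n N q, fun _ y hy => ?_⟩
    obtain ⟨hy1, hy2⟩ := hy
    have hu0a : 0 ≤ (y - EE n N q)/W1 := div_nonneg (by linarith) hW1pos.le
    have hu0b : (y - EE n N q)/W1 ≤ 1 := by
      rw [div_le_one hW1pos, hW1def]
      linarith
    obtain ⟨s, hs01, hphis⟩ := phi_surjOn n hn ⟨hu0a, hu0b⟩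
    have hcanc : W1 * ((y - EE n N q)/W1) = y - EE n N q := by
      field_simp
    have hx : Phi n (((q:ℝ)+s)/(n:ℝ)^N) = y := by
      rw [hsimq s hs01.1 hs01.2, hPq, hPq1, hphis, ← hW1def, hcanc]
      ring
    have hPsiy : PsiF y = ((q:ℝ)+s)/(n:ℝ)^N := by
      rw [hPsiF, ← hx, Psi_Phi n hn]
    show Phi n (F (PsiF y)) = _
    rw [hPsiy, hclaim s hs01.1 hs01.2, hsim2 s hs01.1 hs01.2, hphis, hRatio]
    field_simp
    ring
  -- assemble the piecewise data
  choose zF CF hKey using key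
  refine ⟨n^N, fun q => EE n N q, zF, CF, hpN, EE_zero n N, EE_top n N hn, ?_, ?_, ?_⟩
  · intro q hq
    exact EE_lt_succ n N q hn hq
  · intro q _
    obtain ⟨b, mq, h⟩ := EE_dyadic n N q
    refine ⟨(b:ℤ), mq, ?_⟩
    show EE n N q = _
    rw [h]
    norm_num
  · intro q hq y hy
    have h9 := hKey q hq y hy
    simpa using h9

/-- For every integer `n ≥ 2` there exists an injective group
homomorphism from `T_n` into `T_2 = T`. -/
theorem exists_injective_hom_Tn_to_T2 (n : ℕ) (hn : 2 ≤ n) :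
    ∃ φ : Tn n →* Tn 2, Function.Injective φ := by
  set h : Circle ≃ₜ Circle := cH n hn with hh
  have hmem : ∀ g ∈ TnSet n, (MulAut.conj h) g ∈ Tn 2 := by
    intro g hg
    have h1 : (MulAut.conj h) g = (cH n hn).symm.trans (g.trans (cH n hn)) := by
      rw [MulAut.conj_apply]
      rfl
    rw [h1]
    exact Subgroup.subset_closure (conj_inT n hn g hg)
  have hle : Tn n ≤ Subgroup.comap ((MulAut.conj h).toMonoidHom) (Tn 2) :=
    (Subgroup.closure_le _).mpr (fun g hg => hmem g hg)
  refine ⟨((MulAut.conj h).toMonoidHom.comp (Tn n).subtype).codRestrict (Tn 2)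
    (fun x => Subgroup.mem_comap.mp (hle x.2)), ?_⟩
  intro a b hab
  have h2 : (MulAut.conj h) (a : Circle ≃ₜ Circle) = (MulAut.conj h) (b : Circle ≃ₜ Circle) :=
    congrArg Subtype.val hab
  exact Subtype.ext ((MulAut.conj h).injective h2)

end ThompsonPaper
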